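/- Let E be a Banach space and P, Q : E → E two L^p-projections for the same p with 1 ≤ p < ∞, p ≠ 2. Then P and Q commute: P Q = Q P. -/

import Mathlib

set_option maxHeartbeats 1000000
open Real

private lemma bern_up {x q : ℝ} (hx : -1 ≤ x) (hq0 : 0 ≤ q) (hq1 : q ≤ 1) :
    (1 + x) ^ q ≤ 1 + q * x :=
  rpow_one_add_le_one_add_mul_self hx hq0 hq1

private lemma tangent {p A B : ℝ} (hp : 1 ≤ p) (hA : 0 < A) (hB : 0 ≤ B) :
    B ≤ A + 1 / p * A ^ (1 - p) * (B ^ p - A ^ p) := by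
  have hp0 : 0 < p := lt_of_lt_of_le one_pos hp
  have hAp : 0 < A ^ p := Real.rpow_pos_of_pos hA p
  have hBp : 0 ≤ B ^ p := Real.rpow_nonneg hB p
  have hdiv : 0 ≤ B ^ p / A ^ p := div_nonneg hBp hAp.le
  have hx : -1 ≤ B ^ p / A ^ p - 1 := by linarith
  have h := bern_up (q := 1 / p) hx (by positivity) (by rw [div_le_one hp0]; exact hp)
  rw [add_sub_cancel] at h
  have e1 : (B ^ p / A ^ p) ^ (1 / p) = B / A := by
    rw [Real.div_rpow hBp hAp.le, ← Real.rpow_mul hB, ← Real.rpow_mul hA.le,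
      mul_one_div_cancel hp0.ne', Real.rpow_one, Real.rpow_one]
  rw [e1] at h
  have h2 : B ≤ (1 + 1 / p * (B ^ p / A ^ p - 1)) * A := by
    rw [← div_le_iff₀ hA] at *
    · exact h
  have e2 : (1 + 1 / p * (B ^ p / A ^ p - 1)) * A = A + 1 / p * A ^ (1 - p) * (B ^ p - A ^ p) := by
    have hA1p : A ^ (1 - p) = A / A ^ p := by
      rw [Real.rpow_sub hA, Real.rpow_one]
    rw [hA1p]
    field_simp
  linarith [h2, e2.le, e2.ge]

private lemma L3low {p s : ℝ} (hp1 : 1 ≤ p) (hp2 : p ≤ 2) (hs0 : 0 ≤ s) (hs1 : s ≤ 1 / 2) :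
    (1 + s) ^ p + (1 - s) ^ p ≤ 2 + 2 * (p - 1) * (s * s) := by
  have h1s : (0:ℝ) < 1 + s := by linarith
  have h2s : (0:ℝ) < 1 - s := by linarith
  have hq0 : (0:ℝ) ≤ p - 1 := by linarith
  have hq1 : p - 1 ≤ 1 := by linarith
  have b1 : (1 + s) ^ (p - 1) ≤ 1 + (p - 1) * s := bern_up (by linarith) hq0 hq1
  have b2 : (1 - s) ^ (p - 1) ≤ 1 + (p - 1) * (-s) := by
    have := bern_up (x := -s) (by linarith) hq0 hq1
    rw [show (1:ℝ) + -s = 1 - s by ring] at this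
    exact this
  have e1 : (1 + s) ^ p = (1 + s) * (1 + s) ^ (p - 1) := by
    rw [show p = 1 + (p - 1) by ring, Real.rpow_add h1s, Real.rpow_one]
    ring_nf
  have e2 : (1 - s) ^ p = (1 - s) * (1 - s) ^ (p - 1) := by
    rw [show p = 1 + (p - 1) by ring, Real.rpow_add h2s, Real.rpow_one]
    ring_nf
  have c1 : (1 + s) ^ p ≤ (1 + s) * (1 + (p - 1) * s) := by
    rw [e1]; exact mul_le_mul_of_nonneg_left b1 h1s.le
  have c2 : (1 - s) ^ p ≤ (1 - s) * (1 + (p - 1) * (-s)) := by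
    rw [e2]; exact mul_le_mul_of_nonneg_left b2 h2s.le
  nlinarith [c1, c2]

private lemma L3high {p s : ℝ} (hp : 2 ≤ p) (hs0 : 0 ≤ s) (hs1 : s ≤ 1 / 2) :
    2 + p * (s * s) ≤ (1 + s) ^ p + (1 - s) ^ p := by
  have h1s : (0:ℝ) ≤ 1 + s := by linarith
  have h2s : (0:ℝ) ≤ 1 - s := by linarith
  have e1 : (1 + s) ^ p = (1 + (2 * s + s * s)) ^ (p / 2) := by
    rw [show (1:ℝ) + (2 * s + s * s) = (1 + s) ^ (2:ℕ) by ring, ← Real.rpow_natCast (1 + s) 2,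
      ← Real.rpow_mul h1s, show ((2:ℕ):ℝ) * (p / 2) = p by push_cast; ring]
  have e2 : (1 - s) ^ p = (1 + (-(2 * s) + s * s)) ^ (p / 2) := by
    rw [show (1:ℝ) + (-(2 * s) + s * s) = (1 - s) ^ (2:ℕ) by ring, ← Real.rpow_natCast (1 - s) 2,
      ← Real.rpow_mul h2s, show ((2:ℕ):ℝ) * (p / 2) = p by push_cast; ring]
  have b1 : 1 + p / 2 * (2 * s + s * s) ≤ (1 + (2 * s + s * s)) ^ (p / 2) :=
    one_add_mul_self_le_rpow_one_add (by nlinarith) (by linarith)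
  have b2 : 1 + p / 2 * (-(2 * s) + s * s) ≤ (1 + (-(2 * s) + s * s)) ^ (p / 2) :=
    one_add_mul_self_le_rpow_one_add (by nlinarith) (by linarith)
  rw [e1, e2]
  nlinarith [b1, b2]

private lemma chooser {U C e : ℝ} (hU : 0 < U) (he : 0 < e) (hC : 0 ≤ C)
    (h : ∀ s : ℝ, 0 < s → s ≤ 1 / 2 → U ≤ C * s ^ e) : False := by
  rcases eq_or_lt_of_le hC with hC0 | hC0
  · have h1 := h (1 / 2) (by norm_num) le_rfl
    rw [← hC0, zero_mul] at h1
    linarith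
  · have hUC : 0 < U / (2 * C) := by positivity
    set r := (U / (2 * C)) ^ (1 / e) with hr
    have hr0 : 0 < r := Real.rpow_pos_of_pos hUC _
    set s := min (1 / 2) r with hs
    have hs0 : 0 < s := lt_min (by norm_num) hr0
    have h1 := h s hs0 (min_le_left _ _)
    have h2 : s ^ e ≤ U / (2 * C) := by
      calc s ^ e ≤ r ^ e := Real.rpow_le_rpow hs0.le (min_le_right _ _) he.le
        _ = U / (2 * C) := by
          rw [hr, ← Real.rpow_mul hUC.le, one_div_mul_cancel he.ne', Real.rpow_one]
    have h3 : U ≤ C * (U / (2 * C)) := le_trans h1 (mul_le_mul_of_nonneg_left h2 hC0.le)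
    have h4 : C * (U / (2 * C)) = U / 2 := by
      field_simp
    rw [h4] at h3
    linarith

private lemma crux {E : Type*} [NormedAddCommGroup E] [NormedSpace ℝ E]
    {p : ℝ} (hp1 : 1 ≤ p) (hp2 : p ≠ 2)
    (P Q : E →ₗ[ℝ] E)
    (hQproj : ∀ x : E, Q (Q x) = Q x)
    (hP : ∀ x : E, ‖P x‖ ^ p + ‖x - P x‖ ^ p = ‖x‖ ^ p)
    (hQ : ∀ x : E, ‖Q x‖ ^ p + ‖x - Q x‖ ^ p = ‖x‖ ^ p)
    (x : E) (hx : P x = x) : P (Q x) = Q x := by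
  have hp0 : 0 < p := lt_of_lt_of_le one_pos hp1
  set y := Q x with hydef
  set z := x - Q x with hzdef
  set y1 := P y with hy1def
  set z1 := P z with hz1def
  set u := y - P y with hudef
  have hQy : Q y = y := hQproj x
  have hQz : Q z = 0 := by
    rw [hzdef, map_sub, hQproj x, sub_self]
  have hz_sub : z - P z = -u := by
    rw [hzdef, hudef, map_sub, hx]; abel
  have hPz : P z = z + u := by
    calc P z = z - (z - P z) := by abel
      _ = z + u := by rw [hz_sub]; abel
  have hy1u : y1 = y - u := by rw [hy1def, hudef]; abel
  have hz1u : z1 = z + u := by rw [hz1def, hPz]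
  have star : ∀ t : ℝ, ‖y1 + t • z1‖ ^ p + |1 - t| ^ p * ‖u‖ ^ p
      = ‖y1‖ ^ p + ‖u‖ ^ p + |t| ^ p * (‖z1‖ ^ p + ‖u‖ ^ p) := by
    intro t
    have e1 : Q (y + t • z) = y := by rw [map_add, map_smul, hQy, hQz, smul_zero, add_zero]
    have e2 : (y + t • z) - Q (y + t • z) = t • z := by rw [e1]; abel
    have e3 : P (y + t • z) = y1 + t • z1 := by rw [map_add, map_smul, ← hy1def, ← hz1def]
    have e4 : (y + t • z) - P (y + t • z) = (1 - t) • u := by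
      rw [e3, hy1u, hz1u]; module
    have hqv := hQ (y + t • z)
    rw [e2, e1] at hqv
    have hpv := hP (y + t • z)
    rw [e4, e3] at hpv
    have sm1 : ‖t • z‖ ^ p = |t| ^ p * ‖z‖ ^ p := by
      rw [norm_smul, Real.norm_eq_abs, Real.mul_rpow (abs_nonneg t) (norm_nonneg z)]
    have sm2 : ‖(1 - t) • u‖ ^ p = |1 - t| ^ p * ‖u‖ ^ p := by
      rw [norm_smul, Real.norm_eq_abs, Real.mul_rpow (abs_nonneg _) (norm_nonneg u)]
    have nY : ‖y‖ ^ p = ‖y1‖ ^ p + ‖u‖ ^ p := by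
      rw [← hP y, ← hy1def, ← hudef]
    have nZ : ‖z‖ ^ p = ‖z1‖ ^ p + ‖u‖ ^ p := by
      have h := hP z
      rw [hz_sub, ← hz1def, norm_neg] at h
      exact h.symm
    rw [sm2] at hpv
    rw [sm1, nY, nZ] at hqv
    linarith [hpv, hqv]
  set Y := ‖y1‖ ^ p with hYdef
  set Z := ‖z1‖ ^ p with hZdef
  set U := ‖u‖ ^ p with hUdef
  have hUnn : 0 ≤ U := Real.rpow_nonneg (norm_nonneg u) p
  have hZnn : 0 ≤ Z := Real.rpow_nonneg (norm_nonneg z1) p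
  have hYnn : 0 ≤ Y := Real.rpow_nonneg (norm_nonneg y1) p
  suffices hUle : U ≤ 0 by
    have hU0 : ‖u‖ ^ p = 0 := le_antisymm hUle hUnn
    have hu0 : u = 0 := by
      have := (Real.rpow_eq_zero (norm_nonneg u) hp0.ne').mp hU0
      simpa using this
    have hPy : P y = y := by
      have : y - P y = 0 := hu0
      rw [sub_eq_zero] at this
      exact this.symm
    exact hPy
  by_contra hUc
  push_neg at hUc
  -- common facts
  have hyz : y1 + z1 = x := by
    have hxyz : y + z = x := by rw [hydef, hzdef]; abel
    rw [hy1def, hz1def, ← map_add, hxyz, hx]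
  have Mx : ‖x‖ ^ p = Y + Z + 2 * U := by
    have h := star 1
    rw [sub_self, abs_zero, Real.zero_rpow hp0.ne', abs_one, Real.one_rpow, one_smul,
      hyz] at h
    linarith
  rcases lt_or_gt_of_ne hp2 with hplt | hpgt
  · -- case p < 2 : work near t = 1
    have hxpos : 0 < ‖x‖ := by
      by_contra h
      push_neg at h
      have hx0 : ‖x‖ = 0 := le_antisymm h (norm_nonneg x)
      rw [hx0, Real.zero_rpow hp0.ne'] at Mx
      linarith
    have KA : ∀ s : ℝ, 0 < s → s ≤ 1 / 2 → U ≤ ((p - 1) * (Z + U)) * s ^ (2 - p) := by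
      intro s hs0 hs12
      have h1s : (0:ℝ) < 1 + s := by linarith
      have h2s : (0:ℝ) < 1 - s := by linarith
      have stp := star (1 + s)
      have stm := star (1 - s)
      rw [show (1:ℝ) - (1 + s) = -s by ring, abs_neg, abs_of_pos hs0, abs_of_pos h1s] at stp
      rw [show (1:ℝ) - (1 - s) = s by ring, abs_of_pos hs0, abs_of_pos h2s] at stm
      have hvsum : (y1 + (1 - s) • z1) + (y1 + (1 + s) • z1) = (2:ℝ) • x := by
        rw [← hyz]; module
      have tri : 2 * ‖x‖ ≤ ‖y1 + (1 - s) • z1‖ + ‖y1 + (1 + s) • z1‖ := by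
        calc 2 * ‖x‖ = ‖(2:ℝ) • x‖ := by
              rw [norm_smul, Real.norm_eq_abs]; norm_num
          _ = ‖(y1 + (1 - s) • z1) + (y1 + (1 + s) • z1)‖ := by rw [hvsum]
          _ ≤ _ := norm_add_le _ _
      have tp := tangent hp1 hxpos (norm_nonneg (y1 + (1 + s) • z1))
      have tm := tangent hp1 hxpos (norm_nonneg (y1 + (1 - s) • z1))
      have hc : 0 < 1 / p * ‖x‖ ^ (1 - p) := by positivity
      have key0 : 0 ≤ ‖y1 + (1 - s) • z1‖ ^ p + ‖y1 + (1 + s) • z1‖ ^ p - 2 * ‖x‖ ^ p := by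
        by_contra hneg
        push_neg at hneg
        linarith [tp, tm, tri, mul_neg_of_pos_of_neg hc (by linarith :
          (‖y1 + (1 - s) • z1‖ ^ p - ‖x‖ ^ p) + (‖y1 + (1 + s) • z1‖ ^ p - ‖x‖ ^ p) < 0)]
      have l3 := L3low hp1 hplt.le hs0.le hs12
      have hZU : (0:ℝ) ≤ Z + U := by linarith
      have ka1 : s ^ p * U ≤ (p - 1) * (s * s) * (Z + U) := by
        linarith [key0, stp, stm, Mx, mul_le_mul_of_nonneg_right l3 hZU]
      have hss : s * s = s ^ (2 - p) * s ^ p := by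
        rw [← Real.rpow_add hs0, show (2:ℝ) - p + p = ((2:ℕ):ℝ) by push_cast; ring,
          Real.rpow_natCast]
        ring
      have hsp : 0 < s ^ p := Real.rpow_pos_of_pos hs0 p
      have h7 : U * s ^ p ≤ ((p - 1) * (Z + U) * s ^ (2 - p)) * s ^ p := by
        calc U * s ^ p = s ^ p * U := by ring
          _ ≤ (p - 1) * (s * s) * (Z + U) := ka1
          _ = ((p - 1) * (Z + U) * s ^ (2 - p)) * s ^ p := by rw [hss]; ring
      exact le_of_mul_le_mul_right h7 hsp
    exact chooser hUc (by linarith : (0:ℝ) < 2 - p)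
      (mul_nonneg (by linarith) (by linarith)) KA
  · -- case p > 2 : work near t = 0
    rcases eq_or_lt_of_le hYnn with hY0 | hY0
    · -- Y = 0
      have hy10 : y1 = 0 := by
        have h0 : ‖y1‖ ^ p = 0 := hY0.symm
        have := (Real.rpow_eq_zero (norm_nonneg y1) hp0.ne').mp h0
        simpa using this
      have hxz : x = z1 := by rw [← hyz, hy10, zero_add]
      rw [hxz] at Mx
      -- Mx : Z = Y + Z + 2U with Y = 0
      rw [← hZdef] at Mx
      linarith [Mx, hY0.symm]
    · have hy1pos : 0 < ‖y1‖ := by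
        by_contra h
        push_neg at h
        have : ‖y1‖ = 0 := le_antisymm h (norm_nonneg y1)
        rw [hYdef, this, Real.zero_rpow hp0.ne'] at hY0
        linarith
      have KB : ∀ s : ℝ, 0 < s → s ≤ 1 / 2 → U ≤ (2 * (Z + U) / p) * s ^ (p - 2) := by
        intro s hs0 hs12
        have h1s : (0:ℝ) < 1 + s := by linarith
        have h2s : (0:ℝ) < 1 - s := by linarith
        have stp := star s
        have stm := star (-s)
        rw [abs_of_pos hs0, abs_of_pos (by linarith : (0:ℝ) < 1 - s)] at stp
        rw [show (1:ℝ) - -s = 1 + s by ring, abs_neg, abs_of_pos hs0, abs_of_pos h1s] at stm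
        have hvsum : (y1 + s • z1) + (y1 + (-s) • z1) = (2:ℝ) • y1 := by module
        have tri : 2 * ‖y1‖ ≤ ‖y1 + s • z1‖ + ‖y1 + (-s) • z1‖ := by
          calc 2 * ‖y1‖ = ‖(2:ℝ) • y1‖ := by
                rw [norm_smul, Real.norm_eq_abs]; norm_num
            _ = ‖(y1 + s • z1) + (y1 + (-s) • z1)‖ := by rw [hvsum]
            _ ≤ _ := norm_add_le _ _
        have tp := tangent hp1 hy1pos (norm_nonneg (y1 + s • z1))
        have tm := tangent hp1 hy1pos (norm_nonneg (y1 + (-s) • z1))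
        have hc : 0 < 1 / p * ‖y1‖ ^ (1 - p) := by positivity
        have key0 : 0 ≤ ‖y1 + s • z1‖ ^ p + ‖y1 + (-s) • z1‖ ^ p - 2 * ‖y1‖ ^ p := by
          by_contra hneg
          push_neg at hneg
          linarith [tp, tm, tri, mul_neg_of_pos_of_neg hc (by linarith :
            (‖y1 + s • z1‖ ^ p - ‖y1‖ ^ p) + (‖y1 + (-s) • z1‖ ^ p - ‖y1‖ ^ p) < 0)]
        have l3 := L3high hpgt.le hs0.le hs12
        have kb1 : p * (s * s) * U ≤ 2 * (s ^ p) * (Z + U) := by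
          linarith [key0, stp, stm, mul_le_mul_of_nonneg_right l3 hUnn]
        have hss : s ^ p = s ^ (p - 2) * (s * s) := by
          rw [show s * s = s ^ ((2:ℕ):ℝ) by rw [Real.rpow_natCast]; ring, ← Real.rpow_add hs0,
            show p - 2 + ((2:ℕ):ℝ) = p by push_cast; ring]
        have hs2 : 0 < s * s := by positivity
        have h7 : (p * U) * (s * s) ≤ (2 * (Z + U) * s ^ (p - 2)) * (s * s) := by
          calc (p * U) * (s * s) = p * (s * s) * U := by ring
            _ ≤ 2 * (s ^ p) * (Z + U) := kb1
            _ = (2 * (Z + U) * s ^ (p - 2)) * (s * s) := by rw [hss]; ring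
        have h8 : p * U ≤ 2 * (Z + U) * s ^ (p - 2) := le_of_mul_le_mul_right h7 hs2
        rw [div_mul_eq_mul_div, le_div_iff₀ hp0]
        calc U * p = p * U := by ring
          _ ≤ 2 * (Z + U) * s ^ (p - 2) := h8
      exact chooser hUc (by linarith : (0:ℝ) < p - 2)
        (by positivity) KB

theorem lp_projections_commute
    {E : Type*} [NormedAddCommGroup E] [NormedSpace ℝ E] [CompleteSpace E]
    (p : ℝ) (hp1 : 1 ≤ p) (hp2 : p ≠ 2)
    (P Q : E →ₗ[ℝ] E)
    (hPproj : ∀ x : E, P (P x) = P x)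
    (hQproj : ∀ x : E, Q (Q x) = Q x)
    (hP : ∀ x : E, (‖P x‖ ^ p + ‖x - P x‖ ^ p) ^ (1 / p) = ‖x‖)
    (hQ : ∀ x : E, (‖Q x‖ ^ p + ‖x - Q x‖ ^ p) ^ (1 / p) = ‖x‖) :
    ∀ x : E, P (Q x) = Q (P x) := by
  have hp0 : 0 < p := lt_of_lt_of_le one_pos hp1
  have pow_form : ∀ (R : E →ₗ[ℝ] E), (∀ v : E, (‖R v‖ ^ p + ‖v - R v‖ ^ p) ^ (1 / p) = ‖v‖) →
      ∀ v : E, ‖R v‖ ^ p + ‖v - R v‖ ^ p = ‖v‖ ^ p := by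
    intro R hR v
    have hnn : 0 ≤ ‖R v‖ ^ p + ‖v - R v‖ ^ p := by positivity
    calc ‖R v‖ ^ p + ‖v - R v‖ ^ p
        = ((‖R v‖ ^ p + ‖v - R v‖ ^ p) ^ (1 / p)) ^ p := by
          rw [← Real.rpow_mul hnn, one_div_mul_cancel hp0.ne', Real.rpow_one]
      _ = ‖v‖ ^ p := by rw [hR v]
  have hP' := pow_form P hP
  have hQ' := pow_form Q hQ
  intro x
  set P1 : E →ₗ[ℝ] E := LinearMap.id - P with hP1
  have hP1app : ∀ v : E, P1 v = v - P v := by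
    intro v; simp [hP1]
  have hP1norm : ∀ v : E, ‖P1 v‖ ^ p + ‖v - P1 v‖ ^ p = ‖v‖ ^ p := by
    intro v
    have h1 : v - P1 v = P v := by rw [hP1app]; abel
    rw [h1, hP1app]
    linarith [hP' v]
  have h1 : P (Q (P x)) = Q (P x) :=
    crux hp1 hp2 P Q hQproj hP' hQ' (P x) (hPproj x)
  have hP1idem : P1 (P1 x) = P1 x := by
    rw [hP1app (P1 x), hP1app x, map_sub, hPproj x]
    abel
  have h2 : P1 (Q (P1 x)) = Q (P1 x) :=
    crux hp1 hp2 P1 Q hQproj hP1norm hQ' (P1 x) hP1idem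
  have h3 : P (Q (x - P x)) = 0 := by
    have h2' := h2
    rw [hP1app (Q (P1 x)), hP1app x] at h2'
    exact sub_eq_self.mp h2'
  have hsplit : Q x = Q (P x) + Q (x - P x) := by
    rw [← map_add]
    congr 1
    abel
  rw [hsplit, map_add, h1, h3, add_zero]
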